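/- Let L ≥ 2 and let t ≥ 1 be an odd integer. Then Σ_{k ∈ (ℤ/L)², k ≠ 0} 1/(1 − λ_k^t) ≤ 8 · Σ_{l=1}^{⌊L/2⌋} l/(1 − exp(−4 l² t / L²)). -/

import Mathlib

/-- The normalized adjacency matrix of the `L×L` torus graph on `(ℤ/L)²`:
`A(u,v)` is the number of the four unit coordinate steps leading from `u` to `v`,
divided by `4`. -/
noncomputable def torusAdj (L : ℕ) : Matrix (ZMod L × ZMod L) (ZMod L × ZMod L) ℝ :=
  Matrix.of fun u v =>
    ((if u + (1, 0) = v then (1 : ℝ) else 0) + (if u + (-1, 0) = v then 1 else 0) +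
      (if u + (0, 1) = v then 1 else 0) + (if u + (0, -1) = v then 1 else 0)) / 4

/-- The eigenvalue `λ_k = (cos(2π k_x/L) + cos(2π k_y/L))/2` of the torus adjacency matrix,
well-defined on residues since cosine is `2π`-periodic. -/
noncomputable def torusEig (L : ℕ) (k : ZMod L × ZMod L) : ℝ :=
  (Real.cos (2 * Real.pi * k.1.val / L) + Real.cos (2 * Real.pi * k.2.val / L)) / 2

/-- The "absolute value" of a residue: `min v (L - v)`. -/
def zabs (L : ℕ) (a : ZMod L) : ℕ := min a.val (L - a.val)

section aux

variable (L : ℕ) [NeZero L]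

lemma zabs_le_half (a : ZMod L) : zabs L a ≤ L / 2 := by
  have h := ZMod.val_lt a
  unfold zabs; omega

lemma one_le_zabs {a : ZMod L} (ha : a ≠ 0) : 1 ≤ zabs L a := by
  have h := ZMod.val_lt a
  have h0 : a.val ≠ 0 := by
    intro h'
    exact ha ((ZMod.val_eq_zero a).mp h')
  unfold zabs; omega

lemma cos_val_eq_cos_zabs (a : ZMod L) :
    Real.cos (2 * Real.pi * a.val / L) = Real.cos (2 * Real.pi * (zabs L a) / L) := by
  rcases min_cases a.val (L - a.val) with ⟨h, _⟩ | ⟨h, hle⟩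
  · rw [zabs, h]
  · have hv := ZMod.val_lt a
    have hLpos : (0:ℝ) < L := by exact_mod_cast Nat.pos_of_ne_zero (NeZero.ne L)
    rw [zabs, h]
    have hcast : (2 * Real.pi * ((L : ℝ) - a.val) / L) = 2 * Real.pi - 2 * Real.pi * a.val / L := by
      field_simp
    have : ((L - a.val : ℕ) : ℝ) = (L : ℝ) - a.val := by
      push_cast [Nat.cast_sub hv.le]; ring
    rw [this, hcast, Real.cos_sub, Real.cos_two_pi, Real.sin_two_pi]
    ring

/-- `cos(2πm/L) ≤ 1 - 8m²/L²` for `2m ≤ L`. -/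
lemma cos_le_one_sub (m : ℕ) (hm : 2 * m ≤ L) :
    Real.cos (2 * Real.pi * m / L) ≤ 1 - 8 * (m:ℝ)^2 / (L:ℝ)^2 := by
  have hLpos : (0:ℝ) < L := by exact_mod_cast Nat.pos_of_ne_zero (NeZero.ne L)
  have hpi := Real.pi_pos
  set x : ℝ := 2 * Real.pi * m / L with hx
  have hx0 : 0 ≤ x := by positivity
  have hxpi : x ≤ Real.pi := by
    rw [hx, div_le_iff₀ hLpos]
    have : ((2*m : ℕ):ℝ) ≤ ((L:ℕ):ℝ) := by exact_mod_cast hm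
    push_cast at this
    nlinarith
  have h := Real.cos_le_one_sub_mul_cos_sq (x := x) (by rw [abs_of_nonneg hx0]; exact hxpi)
  have hx2 : x ^ 2 = 4 * Real.pi^2 * (m:ℝ)^2 / (L:ℝ)^2 := by
    rw [hx]; field_simp; ring
  calc Real.cos x ≤ 1 - 2 / Real.pi ^ 2 * x ^ 2 := h
    _ = 1 - 8 * (m:ℝ)^2 / (L:ℝ)^2 := by rw [hx2]; field_simp; ring

lemma eig_le (k : ZMod L × ZMod L) :
    torusEig L k ≤ 1 - 4 * ((max (zabs L k.1) (zabs L k.2) : ℕ) : ℝ)^2 / (L:ℝ)^2 := by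
  have h1 := cos_le_one_sub L (zabs L k.1) (by have := zabs_le_half L k.1; omega)
  have h2 := cos_le_one_sub L (zabs L k.2) (by have := zabs_le_half L k.2; omega)
  have e1 := cos_val_eq_cos_zabs L k.1
  have e2 := cos_val_eq_cos_zabs L k.2
  have hLpos : (0:ℝ) < L := by exact_mod_cast Nat.pos_of_ne_zero (NeZero.ne L)
  have hmax : ((max (zabs L k.1) (zabs L k.2) : ℕ) : ℝ)^2
      ≤ ((zabs L k.1 : ℝ))^2 + ((zabs L k.2 : ℝ))^2 := by
    rcases max_cases (zabs L k.1) (zabs L k.2) with ⟨h, _⟩ | ⟨h, _⟩ <;> rw [h] <;>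
      [exact le_add_of_nonneg_right (by positivity); exact le_add_of_nonneg_left (by positivity)]
  rw [torusEig, e1, e2]
  have hL2 : (0:ℝ) < (L:ℝ)^2 := by positivity
  have hd1 : Real.cos (2 * Real.pi * ↑(zabs L k.1) / ↑L) * (L:ℝ)^2 ≤ (1 - 8 * ((zabs L k.1:ℕ):ℝ)^2 / (L:ℝ)^2) * (L:ℝ)^2 :=
    mul_le_mul_of_nonneg_right h1 hL2.le
  have hd2 : Real.cos (2 * Real.pi * ↑(zabs L k.2) / ↑L) * (L:ℝ)^2 ≤ (1 - 8 * ((zabs L k.2:ℕ):ℝ)^2 / (L:ℝ)^2) * (L:ℝ)^2 :=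
    mul_le_mul_of_nonneg_right h2 hL2.le
  rw [sub_mul, div_mul_cancel₀ _ hL2.ne'] at hd1 hd2
  rw [← mul_le_mul_iff_of_pos_right hL2, sub_mul, div_mul_cancel₀ _ hL2.ne']
  nlinarith

lemma card_zabs_le (j : ℕ) :
    (Finset.univ.filter (fun a : ZMod L => zabs L a ≤ j)).card ≤ 2 * j + 1 := by
  have h := Finset.card_le_card_of_injOn (f := ZMod.val)
    (s := Finset.univ.filter (fun a : ZMod L => zabs L a ≤ j))
    (t := Finset.range (j+1) ∪ Finset.Icc (L-j) (L-1))
    (by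
      intro a ha
      simp only [Finset.mem_coe, Finset.mem_filter, Finset.mem_univ, true_and] at ha
      have hv := ZMod.val_lt a
      simp only [Finset.mem_coe, Finset.mem_union, Finset.mem_range, Finset.mem_Icc]
      unfold zabs at ha; omega)
    (fun a _ b _ h => ZMod.val_injective L h)
  refine h.trans ((Finset.card_union_le _ _).trans ?_)
  have hL1 : 1 ≤ L := Nat.pos_of_ne_zero (NeZero.ne L)
  rw [Finset.card_range, Nat.card_Icc]
  omega

lemma card_zabs_ge (j : ℕ) (hj : 2 * j < L) :
    2 * j + 1 ≤ (Finset.univ.filter (fun a : ZMod L => zabs L a ≤ j)).card := by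
  have h := Finset.card_le_card_of_injOn (f := (Nat.cast : ℕ → ZMod L))
    (s := Finset.range (j+1) ∪ Finset.Icc (L-j) (L-1))
    (t := Finset.univ.filter (fun a : ZMod L => zabs L a ≤ j))
    (by
      intro i hi
      simp only [Finset.mem_coe, Finset.mem_union, Finset.mem_range, Finset.mem_Icc] at hi
      have hiL : i < L := by omega
      simp only [Finset.mem_coe, Finset.mem_filter, Finset.mem_univ, true_and]
      unfold zabs
      rw [ZMod.val_natCast_of_lt hiL]
      omega)
    (by
      intro a ha b hb hab
      simp only [Finset.coe_union, Finset.coe_range, Finset.coe_Icc, Set.mem_union,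
        Set.mem_Iio, Set.mem_Icc] at ha hb
      have haL : a < L := by omega
      have hbL : b < L := by omega
      have := congrArg ZMod.val hab
      rwa [ZMod.val_natCast_of_lt haL, ZMod.val_natCast_of_lt hbL] at this)
  refine le_trans ?_ h
  have hdisj : Disjoint (Finset.range (j+1)) (Finset.Icc (L-j) (L-1)) := by
    rw [Finset.disjoint_left]
    intro i hi hi'
    simp only [Finset.mem_range] at hi
    simp only [Finset.mem_Icc] at hi'
    omega
  rw [Finset.card_union_of_disjoint hdisj, Finset.card_range, Nat.card_Icc]
  omega

lemma card_T (j : ℕ) :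
    (Finset.univ.filter (fun k : ZMod L × ZMod L => zabs L k.1 ≤ j ∧ zabs L k.2 ≤ j)).card
      = (Finset.univ.filter (fun a : ZMod L => zabs L a ≤ j)).card ^ 2 := by
  rw [show (Finset.univ : Finset (ZMod L × ZMod L)) = Finset.univ ×ˢ Finset.univ from
      Finset.univ_product_univ.symm,
    Finset.filter_product (fun a : ZMod L => zabs L a ≤ j) (fun a : ZMod L => zabs L a ≤ j),
    Finset.card_product, sq]

lemma card_shell (l : ℕ) (hl1 : 1 ≤ l) (hl : 2 * l ≤ L) :
    ((Finset.univ.filter (fun k : ZMod L × ZMod L => k ≠ 0)).filter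
      (fun k => max (zabs L k.1) (zabs L k.2) = l)).card ≤ 8 * l := by
  set Tl := Finset.univ.filter (fun k : ZMod L × ZMod L => zabs L k.1 ≤ l ∧ zabs L k.2 ≤ l)
  set Tl' := Finset.univ.filter
    (fun k : ZMod L × ZMod L => zabs L k.1 ≤ l - 1 ∧ zabs L k.2 ≤ l - 1)
  have hsub : Tl' ⊆ Tl := by
    intro k hk
    simp only [Tl, Tl', Finset.mem_filter, Finset.mem_univ, true_and] at hk ⊢
    omega
  have hshell : ((Finset.univ.filter (fun k : ZMod L × ZMod L => k ≠ 0)).filter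
      (fun k => max (zabs L k.1) (zabs L k.2) = l)) ⊆ Tl \ Tl' := by
    intro k hk
    simp only [Finset.mem_filter, Finset.mem_univ, true_and] at hk
    obtain ⟨_, hmax⟩ := hk
    simp only [Tl, Tl', Finset.mem_sdiff, Finset.mem_filter, Finset.mem_univ, true_and]
    omega
  have h1 := Finset.card_le_card hshell
  rw [Finset.card_sdiff_of_subset hsub] at h1
  have hTl : Tl.card ≤ (2*l+1)^2 := by
    rw [card_T]
    exact Nat.pow_le_pow_left (card_zabs_le L l) 2
  have hTl' : (2*(l-1)+1)^2 ≤ Tl'.card := by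
    rw [card_T]
    exact Nat.pow_le_pow_left (card_zabs_ge L (l-1) (by omega)) 2
  have he : 2*(l-1)+1 = 2*l-1 := by omega
  rw [he] at hTl'
  have hexp : (2*l+1)^2 = (2*l-1)^2 + 8*l := by
    have : 2*l-1+1 = 2*l := by omega
    nlinarith [this]
  omega

end aux

/-- For odd `t ≥ 1`,
`Σ_{k ≠ 0} 1/(1 − λ_k^t) ≤ 8 · Σ_{l=1}^{⌊L/2⌋} l/(1 − exp(−4l²t/L²))`. -/
theorem torus_sum_inv_one_sub_pow_upper_bound
    (L : ℕ) [NeZero L] (hL : 2 ≤ L) (t : ℕ) (ht : 1 ≤ t) (hodd : Odd t) :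
    ∑ k ∈ Finset.univ.filter (fun k : ZMod L × ZMod L => k ≠ 0),
        1 / (1 - torusEig L k ^ t) ≤
      8 * ∑ l ∈ Finset.Icc 1 (L / 2),
        (l : ℝ) / (1 - Real.exp (-4 * (l : ℝ) ^ 2 * t / (L : ℝ) ^ 2)) := by
  classical
  set s := Finset.univ.filter (fun k : ZMod L × ZMod L => k ≠ 0) with hs
  set f : ZMod L × ZMod L → ℕ := fun k => max (zabs L k.1) (zabs L k.2) with hf
  set g : ℕ → ℝ := fun l => 1 / (1 - Real.exp (-4 * (l:ℝ)^2 * t / (L:ℝ)^2)) with hg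
  have hLpos : (0:ℝ) < L := by exact_mod_cast Nat.lt_of_lt_of_le Nat.zero_lt_two hL
  have hE : ∀ l : ℕ, 1 ≤ l → Real.exp (-4 * (l:ℝ)^2 * t / (L:ℝ)^2) < 1 := by
    intro l hl
    rw [Real.exp_lt_one_iff]
    apply div_neg_of_neg_of_pos
    · have hl' : (1:ℝ) ≤ l := by exact_mod_cast hl
      have ht' : (1:ℝ) ≤ t := by exact_mod_cast ht
      nlinarith
    · positivity
  have hgnn : ∀ l : ℕ, 1 ≤ l → 0 ≤ g l := by
    intro l hl
    have := hE l hl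
    have hden : 0 < 1 - Real.exp (-4 * (l:ℝ)^2 * t / (L:ℝ)^2) := by linarith
    positivity
  have hmem : ∀ k ∈ s, 1 ≤ f k ∧ f k ≤ L / 2 := by
    intro k hk
    simp only [hs, Finset.mem_filter, Finset.mem_univ, true_and] at hk
    have h1 : k.1 ≠ 0 ∨ k.2 ≠ 0 := by
      by_contra h
      push_neg at h
      exact hk (Prod.ext h.1 h.2)
    constructor
    · rcases h1 with h | h
      · exact le_trans (one_le_zabs L h) (le_max_left _ _)
      · exact le_trans (one_le_zabs L h) (le_max_right _ _)
    · exact max_le (zabs_le_half L k.1) (zabs_le_half L k.2)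
  have key : ∀ k ∈ s, 1 / (1 - torusEig L k ^ t) ≤ g (f k) := by
    intro k hk
    obtain ⟨hf1, hf2⟩ := hmem k hk
    have hEl := hE (f k) hf1
    have hpow : torusEig L k ^ t ≤ Real.exp (-4 * ((f k : ℕ):ℝ)^2 * t / (L:ℝ)^2) := by
      rcases le_or_gt (torusEig L k) 0 with hneg | hpos
      · exact (hodd.pow_nonpos hneg).trans (Real.exp_pos _).le
      · have h1 : torusEig L k ≤ Real.exp (-(4 * ((f k : ℕ):ℝ)^2 / (L:ℝ)^2)) := by
          refine (eig_le L k).trans ?_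
          have := Real.add_one_le_exp (-(4 * ((f k : ℕ):ℝ)^2 / (L:ℝ)^2))
          linarith
        have h2 := pow_le_pow_left₀ hpos.le h1 t
        refine h2.trans_eq ?_
        rw [← Real.exp_nat_mul]
        congr 1
        ring
    have hden : 0 < 1 - Real.exp (-4 * ((f k : ℕ):ℝ)^2 * t / (L:ℝ)^2) := by linarith
    exact one_div_le_one_div_of_le hden (by linarith)
  calc ∑ k ∈ s, 1 / (1 - torusEig L k ^ t)
      ≤ ∑ k ∈ s, g (f k) := Finset.sum_le_sum key
    _ = ∑ b ∈ s.image f, (s.filter fun k => f k = b).card • g b := Finset.sum_comp g f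
    _ ≤ ∑ b ∈ Finset.Icc 1 (L / 2), (s.filter fun k => f k = b).card • g b := by
        apply Finset.sum_le_sum_of_subset_of_nonneg
        · intro b hb
          simp only [Finset.mem_image] at hb
          obtain ⟨k, hk, rfl⟩ := hb
          obtain ⟨h1, h2⟩ := hmem k hk
          simp only [Finset.mem_Icc]
          exact ⟨h1, h2⟩
        · intro b hb _
          simp only [Finset.mem_Icc] at hb
          exact nsmul_nonneg (hgnn b hb.1) _
    _ ≤ ∑ b ∈ Finset.Icc 1 (L / 2), ((8 * b : ℕ) : ℝ) * g b := by
        apply Finset.sum_le_sum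
        intro b hb
        simp only [Finset.mem_Icc] at hb
        have hcard := card_shell L b hb.1 (by omega)
        rw [nsmul_eq_mul]
        exact mul_le_mul_of_nonneg_right (by exact_mod_cast hcard) (hgnn b hb.1)
    _ = 8 * ∑ l ∈ Finset.Icc 1 (L / 2),
          (l : ℝ) / (1 - Real.exp (-4 * (l : ℝ) ^ 2 * t / (L : ℝ) ^ 2)) := by
        rw [Finset.mul_sum]
        apply Finset.sum_congr rfl
        intro b _
        simp only [hg]
        push_cast
        ring
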